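/- Let q be a prime power, n a positive integer, 1 ≤ μ ≤ n − 1, and k = n − μ. Let H ∈ Fq^{k×n} have rank k and let B ∈ Fq^{μ×n}. Let S be uniformly distributed on Fq^k, let X be a random variable with values in Fq^n whose conditional distribution given S = s is uniform on the coset {x ∈ Fq^n : Hx = s} for each s, and set W = BX. Then I(S;W) = 0 if and only if the row space of H and the row space of B intersect trivially (⟨H⟩ ∩ ⟨B⟩ = {0}). -/

import Mathlib

set_option autoImplicit false

open Matrix MeasureTheory

/-- Shannon entropy (in nats) of a finitely-valued random variable. -/
noncomputable def entropy {Ω α : Type*} [Fintype α] [MeasurableSpace Ω]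
    (P : Measure Ω) (X : Ω → α) : ℝ :=
  - ∑ a : α, (P {ω | X ω = a}).toReal * Real.log (P {ω | X ω = a}).toReal

/-- Mutual information (in nats) `I(X;Y) = H(X) + H(Y) - H(X,Y)`. -/
noncomputable def mutualInfo {Ω α β : Type*} [Fintype α] [Fintype β] [MeasurableSpace Ω]
    (P : Measure Ω) (X : Ω → α) (Y : Ω → β) : ℝ :=
  entropy P X + entropy P Y - entropy P (fun ω => (X ω, Y ω))

set_option maxHeartbeats 1000000

open scoped ENNReal

namespace OW

lemma prob_comp_eq_sum {Ω γ α : Type*} [Fintype Ω] [MeasurableSpace Ω]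
    [MeasurableSingletonClass Ω] [Fintype γ] [DecidableEq γ] [DecidableEq α]
    (P : Measure Ω) (X : Ω → γ) (f : γ → α) (a : α) :
    P {ω | f (X ω) = a} = ∑ x ∈ Finset.univ.filter (fun x => f x = a), P {ω | X ω = x} := by
  have h : {ω | f (X ω) = a} = ⋃ x ∈ Finset.univ.filter (fun x => f x = a), {ω | X ω = x} := by
    ext ω
    simp only [Set.mem_setOf_eq, Set.mem_iUnion, Finset.mem_filter, Finset.mem_univ, true_and]
    constructor
    · intro h; exact ⟨X ω, h, rfl⟩
    · rintro ⟨x, hx, rfl⟩; exact hx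
  rw [h, measure_biUnion_finset]
  · intro x _ y _ hxy
    apply Set.disjoint_left.mpr
    intro ω h1 h2
    exact hxy (h1.symm.trans h2)
  · intro b _; exact (Set.toFinite _).measurableSet

lemma sum_prob_eq_one {Ω γ : Type*} [Fintype Ω] [MeasurableSpace Ω]
    [MeasurableSingletonClass Ω] [Fintype γ] [DecidableEq γ]
    (P : Measure Ω) [IsProbabilityMeasure P] (X : Ω → γ) :
    ∑ x : γ, P {ω | X ω = x} = 1 := by
  have h : (Set.univ : Set Ω) = ⋃ x ∈ (Finset.univ : Finset γ), {ω | X ω = x} := by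
    ext ω
    simp only [Set.mem_univ, Set.mem_iUnion, Finset.mem_univ, true_and, Set.mem_setOf_eq, true_iff]
    exact ⟨X ω, trivial, rfl⟩
  have := measure_univ (μ := P)
  rw [h, measure_biUnion_finset] at this
  · rw [← this]
  · intro x _ y _ hxy
    apply Set.disjoint_left.mpr
    intro ω h1 h2
    exact hxy (h1.symm.trans h2)
  · intro b _; exact (Set.toFinite _).measurableSet

lemma entropy_uniform {Ω α : Type*} [Fintype α] [MeasurableSpace Ω] (P : Measure Ω) (Y : Ω → α)
    (T : Finset α) (hT : 0 < T.card)
    (h1 : ∀ a ∈ T, P {ω | Y ω = a} = ((T.card : ℝ≥0∞))⁻¹)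
    (h0 : ∀ a ∉ T, P {ω | Y ω = a} = 0) :
    entropy P Y = Real.log T.card := by
  have hcard : (T.card : ℝ) ≠ 0 := Nat.cast_ne_zero.mpr hT.ne'
  unfold entropy
  rw [← Finset.sum_subset (Finset.subset_univ T) (by
    intro a _ ha
    rw [h0 a ha]
    simp)]
  have hterm : ∀ a ∈ T, (P {ω | Y ω = a}).toReal * Real.log (P {ω | Y ω = a}).toReal
      = ((T.card : ℝ))⁻¹ * Real.log ((T.card : ℝ))⁻¹ := by
    intro a ha
    rw [h1 a ha, ENNReal.toReal_inv]
    simp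
  rw [Finset.sum_congr rfl hterm, Finset.sum_const, nsmul_eq_mul, Real.log_inv]
  field_simp

lemma card_fiber {F M V : Type*} [Field F] [AddCommGroup M] [Module F M]
    [AddCommGroup V] [Module F V] [Fintype M] [DecidableEq M] [DecidableEq V]
    (φ : M →ₗ[F] V) (x₀ : M) :
    (Finset.univ.filter (fun x => φ x = φ x₀)).card = Nat.card (LinearMap.ker φ) := by
  classical
  have : Fintype (LinearMap.ker φ) := Fintype.ofFinite _
  rw [Nat.card_eq_fintype_card, ← Fintype.card_subtype]
  apply Fintype.card_congr
  exact
    { toFun := fun x => ⟨x.1 - x₀, by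
        have := x.2
        simp only [LinearMap.mem_ker, map_sub, this, sub_self]⟩
      invFun := fun y => ⟨y.1 + x₀, by
        have := y.2
        rw [LinearMap.mem_ker] at this
        simp [map_add, this]⟩
      left_inv := fun x => by simp
      right_inv := fun y => by simp }

end OW

namespace OW

lemma entropy_map {Ω : Type*} [Fintype Ω] [MeasurableSpace Ω] [MeasurableSingletonClass Ω]
    (P : Measure Ω) [IsProbabilityMeasure P]
    {F : Type*} [Field F] [Fintype F] {n : ℕ}
    {V : Type*} [AddCommGroup V] [Module F V] [Fintype V]
    (φ : (Fin n → F) →ₗ[F] V) (X : Ω → Fin n → F)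
    (hX : ∀ x, P {ω | X ω = x} = (((Fintype.card F : ℝ≥0∞)) ^ n)⁻¹) :
    entropy P (fun ω => φ (X ω))
      = (Module.finrank F (LinearMap.range φ)) * Real.log (Fintype.card F) := by
  classical
  have hkerf : Fintype (LinearMap.ker φ) := Fintype.ofFinite _
  set q := Fintype.card F with hq
  have hq0 : 0 < q := Fintype.card_pos
  set r := Module.finrank F (LinearMap.range φ) with hr
  set Nker := Nat.card (LinearMap.ker φ) with hNker
  set T : Finset V := Finset.univ.image (fun x : Fin n → F => φ x) with hT
  -- fiber probabilities
  have hprob : ∀ a : V, P {ω | φ (X ω) = a}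
      = ((Finset.univ.filter (fun x : Fin n → F => φ x = a)).card : ℝ≥0∞)
        * (((q : ℝ≥0∞)) ^ n)⁻¹ := by
    intro a
    rw [prob_comp_eq_sum P X (fun x => φ x) a,
      Finset.sum_congr rfl (fun x _ => hX x), Finset.sum_const, nsmul_eq_mul]
  have hzero : ∀ a ∉ T, P {ω | φ (X ω) = a} = 0 := by
    intro a ha
    rw [hprob a]
    have he : Finset.univ.filter (fun x : Fin n → F => φ x = a) = ∅ :=
      Finset.filter_eq_empty_iff.mpr (fun x _ hx =>
        ha (Finset.mem_image.mpr ⟨x, Finset.mem_univ x, hx⟩))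
    rw [he]
    simp
  have hval : ∀ a ∈ T, P {ω | φ (X ω) = a} = (Nker : ℝ≥0∞) * (((q : ℝ≥0∞)) ^ n)⁻¹ := by
    intro a ha
    obtain ⟨x₀, _, rfl⟩ := Finset.mem_image.mp ha
    rw [hprob, card_fiber φ x₀]
  have hTpos : 0 < T.card :=
    Finset.card_pos.mpr ⟨φ 0, Finset.mem_image.mpr ⟨0, Finset.mem_univ _, rfl⟩⟩
  -- total mass
  have hsum : ∑ a : V, P {ω | φ (X ω) = a} = 1 := sum_prob_eq_one P (fun ω => φ (X ω))
  have hone : (T.card : ℝ≥0∞) * ((Nker : ℝ≥0∞) * (((q : ℝ≥0∞)) ^ n)⁻¹) = 1 := by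
    rw [← hsum, ← Finset.sum_subset (Finset.subset_univ T) (fun a _ ha => hzero a ha),
      Finset.sum_congr rfl hval, Finset.sum_const, nsmul_eq_mul]
  have hTne : (T.card : ℝ≥0∞) ≠ 0 := by
    simp [hTpos.ne']
  have hTnt : (T.card : ℝ≥0∞) ≠ ⊤ := ENNReal.natCast_ne_top _
  have hc : (Nker : ℝ≥0∞) * (((q : ℝ≥0∞)) ^ n)⁻¹ = ((T.card : ℝ≥0∞))⁻¹ := by
    calc (Nker : ℝ≥0∞) * (((q : ℝ≥0∞)) ^ n)⁻¹
        = (T.card : ℝ≥0∞)⁻¹ * ((T.card : ℝ≥0∞) * ((Nker : ℝ≥0∞) * (((q : ℝ≥0∞)) ^ n)⁻¹)) := by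
          rw [← mul_assoc, ENNReal.inv_mul_cancel hTne hTnt, one_mul]
      _ = ((T.card : ℝ≥0∞))⁻¹ := by rw [hone, mul_one]
  have hent : entropy P (fun ω => φ (X ω)) = Real.log T.card :=
    entropy_uniform P (fun ω => φ (X ω)) T hTpos
      (fun a ha => (hval a ha).trans hc) hzero
  -- counting: T.card = q ^ r
  have hrank : r + Module.finrank F (LinearMap.ker φ) = n := by
    rw [hr, LinearMap.finrank_range_add_finrank_ker φ, Module.finrank_pi, Fintype.card_fin]
  have hNkerq : Nker = q ^ (Module.finrank F (LinearMap.ker φ)) := by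
    rw [hNker, Nat.card_eq_fintype_card, Module.card_eq_pow_finrank (K := F)]
  have hcount : q ^ n = T.card * Nker := by
    have h1 := Finset.card_eq_sum_card_image (fun x : Fin n → F => φ x) Finset.univ
    rw [Finset.card_univ, Fintype.card_fun, Fintype.card_fin] at h1
    have h2 : ∀ a ∈ T, (Finset.filter (fun x : Fin n → F => φ x = a) Finset.univ).card = Nker := by
      intro a ha
      obtain ⟨x₀, _, rfl⟩ := Finset.mem_image.mp ha
      exact card_fiber φ x₀
    rw [h1, ← hT, Finset.sum_congr rfl h2, Finset.sum_const, smul_eq_mul]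
  have hTcard : T.card = q ^ r := by
    have hNpos : 0 < Nker := by
      rw [hNkerq]; exact pow_pos hq0 _
    apply Nat.eq_of_mul_eq_mul_right hNpos
    rw [← hcount, hNkerq, ← pow_add, hrank]
  rw [hent, hTcard]
  push_cast
  rw [Real.log_pow]

end OW

namespace OW

lemma X_uniform {Ω : Type*} [Fintype Ω] [MeasurableSpace Ω] [MeasurableSingletonClass Ω]
    (P : Measure Ω) [IsProbabilityMeasure P]
    {F : Type*} [Field F] [Fintype F] {n k : ℕ}
    (H : Matrix (Fin k) (Fin n) F) (X : Ω → Fin n → F)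
    (hSunif : ∀ s₁ s₂ : Fin k → F, P {ω | H *ᵥ X ω = s₁} = P {ω | H *ᵥ X ω = s₂})
    (hXunif : ∀ x₁ x₂ : Fin n → F, H *ᵥ x₁ = H *ᵥ x₂ →
      P {ω | X ω = x₁} = P {ω | X ω = x₂}) :
    ∀ x, P {ω | X ω = x} = (((Fintype.card F : ℝ≥0∞)) ^ n)⁻¹ := by
  classical
  set N := Nat.card (LinearMap.ker H.mulVecLin) with hN
  have hfib : ∀ x : Fin n → F,
      (Finset.univ.filter (fun z : Fin n → F => H *ᵥ z = H *ᵥ x)).card = N := by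
    intro x
    have := card_fiber (H.mulVecLin) x
    rw [hN, ← this]
    congr 1
  have hNpos : 0 < N := Nat.card_pos
  have hS : ∀ x : Fin n → F,
      P {ω | H *ᵥ X ω = H *ᵥ x} = (N : ℝ≥0∞) * P {ω | X ω = x} := by
    intro x
    rw [prob_comp_eq_sum P X (fun z => H *ᵥ z) (H *ᵥ x)]
    have h2 : ∀ z ∈ Finset.univ.filter (fun z : Fin n → F => H *ᵥ z = H *ᵥ x),
        P {ω | X ω = z} = P {ω | X ω = x} := by
      intro z hz
      exact hXunif z x (Finset.mem_filter.mp hz).2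
    rw [Finset.sum_congr rfl h2, Finset.sum_const, nsmul_eq_mul, hfib x]
  have hpxy : ∀ x y : Fin n → F, P {ω | X ω = x} = P {ω | X ω = y} := by
    intro x y
    have h := hSunif (H *ᵥ x) (H *ᵥ y)
    rw [hS x, hS y] at h
    exact (ENNReal.mul_right_inj (by exact_mod_cast hNpos.ne') (ENNReal.natCast_ne_top _)).mp h
  intro x
  have hsum := sum_prob_eq_one P X
  have htot : ((Fintype.card F : ℝ≥0∞) ^ n) * P {ω | X ω = x} = 1 := by
    rw [← hsum, Finset.sum_congr rfl (fun y _ => hpxy y x), Finset.sum_const, nsmul_eq_mul,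
      Finset.card_univ, Fintype.card_fun, Fintype.card_fin]
    push_cast
    ring
  have hq0 : ((Fintype.card F : ℝ≥0∞) ^ n) ≠ 0 := by
    apply pow_ne_zero
    exact_mod_cast Fintype.card_pos.ne'
  have hqt : ((Fintype.card F : ℝ≥0∞) ^ n) ≠ ⊤ := by
    exact ENNReal.pow_ne_top (ENNReal.natCast_ne_top _)
  calc P {ω | X ω = x}
      = ((Fintype.card F : ℝ≥0∞) ^ n)⁻¹ * (((Fintype.card F : ℝ≥0∞) ^ n) * P {ω | X ω = x}) := by
        rw [← mul_assoc, ENNReal.inv_mul_cancel hq0 hqt, one_mul]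
    _ = ((Fintype.card F : ℝ≥0∞) ^ n)⁻¹ := by rw [htot, mul_one]

end OW

/-- Ozarow–Wyner coset coding: with `k = n - μ`, `H ∈ F^{k×n}` of full rank `k`, a message
`S = HX` uniform on `F^k`, and `X` conditionally uniform on the coset `{x : Hx = s}` given
`S = s`, the eavesdropper observation `W = BX` reveals nothing (`I(S;W) = 0`) if and only if
the row spaces of `H` and `B` intersect trivially. -/
theorem cosetCoding_secure_iff_rowSpace_inter_trivial
    (q : ℕ) (hq : IsPrimePow q) (n μ : ℕ) (hμ1 : 1 ≤ μ) (hμn : μ ≤ n - 1)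
    (F : Type) [Field F] [Fintype F] (hF : Fintype.card F = q)
    (H : Matrix (Fin (n - μ)) (Fin n) F) (hH : H.rank = n - μ)
    (B : Matrix (Fin μ) (Fin n) F)
    (Ω : Type) [Fintype Ω] [MeasurableSpace Ω] [MeasurableSingletonClass Ω]
    (P : Measure Ω) [IsProbabilityMeasure P]
    (X : Ω → Fin n → F)
    (hSunif : ∀ s₁ s₂ : Fin (n - μ) → F,
      P {ω | H *ᵥ X ω = s₁} = P {ω | H *ᵥ X ω = s₂})
    (hXunif : ∀ x₁ x₂ : Fin n → F, H *ᵥ x₁ = H *ᵥ x₂ →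
      P {ω | X ω = x₁} = P {ω | X ω = x₂}) :
    mutualInfo P (fun ω => H *ᵥ X ω) (fun ω => B *ᵥ X ω) = 0 ↔
      Submodule.span F (Set.range fun i => H i) ⊓
        Submodule.span F (Set.range fun i => B i) = ⊥ := by
  classical
  have hXu : ∀ x, P {ω | X ω = x} = (((Fintype.card F : ℝ≥0∞)) ^ n)⁻¹ :=
    OW.X_uniform P H X hSunif hXunif
  set L := Real.log (Fintype.card F) with hL
  set U : Submodule F (Fin n → F) := Submodule.span F (Set.range fun i => H i) with hU
  set V' : Submodule F (Fin n → F) := Submodule.span F (Set.range fun i => B i) with hV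
  -- entropies of the individual observations
  have hS : entropy P (fun ω => H *ᵥ X ω)
      = (Module.finrank F (LinearMap.range H.mulVecLin)) * L := by
    have := OW.entropy_map P H.mulVecLin X hXu
    simpa only [Matrix.mulVecLin_apply] using this
  have hW : entropy P (fun ω => B *ᵥ X ω)
      = (Module.finrank F (LinearMap.range B.mulVecLin)) * L := by
    have := OW.entropy_map P B.mulVecLin X hXu
    simpa only [Matrix.mulVecLin_apply] using this
  set M : Matrix (Fin (n - μ) ⊕ Fin μ) (Fin n) F := Matrix.fromRows H B with hM
  set e := LinearEquiv.sumArrowLequivProdArrow (Fin (n - μ)) (Fin μ) F F with he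
  have hpair_fun : (fun ω => (H *ᵥ X ω, B *ᵥ X ω))
      = fun ω => (e.toLinearMap ∘ₗ M.mulVecLin) (X ω) := by
    funext ω
    refine Prod.ext ?_ ?_ <;> funext i <;>
      simp [he, hM, LinearEquiv.sumArrowLequivProdArrow, Matrix.fromRows_mulVec]
  have hPair : entropy P (fun ω => (H *ᵥ X ω, B *ᵥ X ω))
      = (Module.finrank F (LinearMap.range M.mulVecLin)) * L := by
    rw [hpair_fun, OW.entropy_map P (e.toLinearMap ∘ₗ M.mulVecLin) X hXu]
    congr 2
    rw [LinearMap.range_comp]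
    exact LinearEquiv.finrank_map_eq e _
  -- identify the ranks with row space dimensions
  have hrowH : Module.finrank F (LinearMap.range H.mulVecLin) = Module.finrank F U := by
    have h1 : Module.finrank F (LinearMap.range Hᵀ.mulVecLin)
        = Module.finrank F (LinearMap.range H.mulVecLin) := Matrix.rank_transpose H
    rw [Matrix.range_mulVecLin, Matrix.col_transpose, Matrix.row] at h1
    exact h1.symm
  have hrowB : Module.finrank F (LinearMap.range B.mulVecLin) = Module.finrank F V' := by
    have h1 : Module.finrank F (LinearMap.range Bᵀ.mulVecLin)
        = Module.finrank F (LinearMap.range B.mulVecLin) := Matrix.rank_transpose B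
    rw [Matrix.range_mulVecLin, Matrix.col_transpose, Matrix.row] at h1
    exact h1.symm
  have hrowM : Module.finrank F (LinearMap.range M.mulVecLin)
      = Module.finrank F (U ⊔ V' : Submodule F (Fin n → F)) := by
    have h1 : Module.finrank F (LinearMap.range Mᵀ.mulVecLin)
        = Module.finrank F (LinearMap.range M.mulVecLin) := Matrix.rank_transpose M
    rw [Matrix.range_mulVecLin, Matrix.col_transpose, Matrix.row] at h1
    have h2 : Submodule.span F (Set.range M) = U ⊔ V' := by
      have h3 : Set.range M = Set.range H ∪ Set.range B := by
        have h4 : (M : Fin (n - μ) ⊕ Fin μ → Fin n → F) = Sum.elim H B := rfl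
        rw [h4]
        exact Set.Sum.elim_range H B
      rw [h3, Submodule.span_union, hU, hV]
    rw [h2] at h1
    exact h1.symm
  -- dimension formula
  have hdim := Submodule.finrank_sup_add_finrank_inf_eq U V'
  have hmi : mutualInfo P (fun ω => H *ᵥ X ω) (fun ω => B *ᵥ X ω)
      = (Module.finrank F (U ⊓ V' : Submodule F (Fin n → F))) * L := by
    unfold mutualInfo
    rw [hS, hW, hPair, hrowH, hrowB, hrowM]
    have hcast : (Module.finrank F (U ⊔ V' : Submodule F (Fin n → F)) : ℝ)
        + (Module.finrank F (U ⊓ V' : Submodule F (Fin n → F)) : ℝ)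
        = (Module.finrank F U : ℝ) + (Module.finrank F V' : ℝ) := by
      exact_mod_cast hdim
    linear_combination (-L) * hcast
  rw [hmi]
  have hLpos : 0 < L := by
    rw [hL]
    apply Real.log_pos
    exact_mod_cast Fintype.one_lt_card
  constructor
  · intro h
    have h0 : Module.finrank F (U ⊓ V' : Submodule F (Fin n → F)) = 0 := by
      rcases mul_eq_zero.mp h with h' | h'
      · exact_mod_cast h'
      · exact absurd h' hLpos.ne'
    exact Submodule.finrank_eq_zero.mp h0
  · intro h
    rw [h, finrank_bot]
    simp
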